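/- Let n ≥ 3 and 3 ≤ k ≤ n. Let E_{n,k} ⊆ ℝ^n be the set of points u = (u_1, …, u_n) satisfying 0 < u_1, u_{i−1} < u_i for all 2 ≤ i ≤ k−1, Σ_{j=i−k+1}^{i−1} u_j < u_i for all k ≤ i ≤ n, and u_n ≤ 1. Then the n-dimensional Lebesgue measure of E_{n,k} equals (1/n!) · (∏_{ℓ=1}^{k−1} 1/T_{k,ℓ}(n)) · (∏_{i=1}^{n−k+1} 1/T_{k,k−1}(n−i)). -/

import Mathlib

set_option maxHeartbeats 1000000


open MeasureTheory Finset ENNReal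

/-- `T k ℓ` : the `(k-1)`-bonacci sequence with initial terms
`T k ℓ 1 = ⋯ = T k ℓ (ℓ-1) = 0`, `T k ℓ ℓ = ⋯ = T k ℓ (k-1) = 1` and
recurrence `T k ℓ m = ∑_{p=1}^{k-1} T k ℓ (m-p)` for `m ≥ k`. -/
def T (k ℓ : ℕ) : ℕ → ℕ
  | m =>
    if m < k then (if ℓ ≤ m then 1 else 0)
    else if h0 : m = 0 then 0
    else ∑ p ∈ (Finset.range (k - 1)).attach, T k ℓ (m - (↑p + 1))
  termination_by m => m
  decreasing_by omega

/-- `S k` : the `(k-1)`-bonacci sequence with `S k 1 = 1`, `S k i = 2^(i-2)` for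
`2 ≤ i ≤ k-1`, and recurrence `S k m = ∑_{p=1}^{k-1} S k (m-p)` for `m ≥ k`. -/
def S (k : ℕ) : ℕ → ℕ
  | m =>
    if h0 : m = 0 then 0
    else if m = 1 then 1
    else if m < k then 2 ^ (m - 2)
    else ∑ p ∈ (Finset.range (k - 1)).attach, S k (m - (↑p + 1))
  termination_by m => m
  decreasing_by omega

/-- No `k`-gon can be formed from the (increasingly sorted) stick lengths `y`:
for every window of `k` consecutive entries, i.e. every (0-indexed) `i` with
`i + (k-1) < n`, one has `y i + ⋯ + y (i+k-2) < y (i+k-1)`. -/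
def NoPolygon (n k : ℕ) (y : Fin n → ℝ) : Prop :=
  ∀ i : ℕ, ∀ hi : i + (k - 1) < n,
    (∑ j : Fin (k - 1), y ⟨i + j, by have := j.isLt; omega⟩) < y ⟨i + (k - 1), hi⟩



lemma measSet (n : ℕ) (t : ℝ) :
    MeasurableSet {v : Fin n → ℝ | (∀ i, 0 < v i) ∧ ∑ i, v i ≤ t} := by
  have h1 : {v : Fin n → ℝ | (∀ i, 0 < v i) ∧ ∑ i, v i ≤ t} =
      (⋂ i, {v | 0 < v i}) ∩ {v | ∑ i, v i ≤ t} := by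
    ext v; simp [Set.mem_iInter]
  rw [h1]
  refine MeasurableSet.inter ?_ ?_
  · exact MeasurableSet.iInter fun i =>
      measurableSet_lt measurable_const (measurable_pi_apply i)
  · exact measurableSet_le (Finset.measurable_sum _ fun i _ => measurable_pi_apply i)
      measurable_const

lemma stdSimplexVol : ∀ (n : ℕ) (t : ℝ), 0 ≤ t →
    volume {v : Fin n → ℝ | (∀ i, 0 < v i) ∧ ∑ i, v i ≤ t} =
      ENNReal.ofReal t ^ n * ((n.factorial : ℝ≥0∞))⁻¹ := by
  intro n
  induction n with
  | zero =>
    intro t ht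
    have h : {v : Fin 0 → ℝ | (∀ i, 0 < v i) ∧ ∑ i, v i ≤ t} = Set.univ := by
      ext v
      simp only [Set.mem_setOf_eq, Set.mem_univ, iff_true]
      exact ⟨fun i => i.elim0, by simpa using ht⟩
    rw [h, MeasureTheory.Measure.volume_pi_eq_dirac]; simp
  | succ n ih =>
    intro t ht
    set e := MeasurableEquiv.piFinSuccAbove (fun _ : Fin (n + 1) => ℝ) 0 with he
    have hmp := MeasureTheory.volume_preserving_piFinSuccAbove (fun _ : Fin (n + 1) => ℝ) 0
    set Sset := {v : Fin (n+1) → ℝ | (∀ i, 0 < v i) ∧ ∑ i, v i ≤ t} with hS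
    have hSm := measSet (n+1) t
    have key : volume (e.symm ⁻¹' Sset) = volume Sset :=
      (hmp.symm e).measure_preimage hSm.nullMeasurableSet
    have hpre : e.symm ⁻¹' Sset =
        {p : ℝ × (Fin n → ℝ) | (0 < p.1 ∧ ∀ j, 0 < p.2 j) ∧ p.1 + ∑ j, p.2 j ≤ t} := by
      ext ⟨x, y⟩
      have hsymm : e.symm (x, y) = Fin.cons x y := by
        simp [he, MeasurableEquiv.piFinSuccAbove, Fin.insertNth_zero]
        rfl
      simp only [Set.mem_preimage, hS, Set.mem_setOf_eq, hsymm]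
      rw [Fin.forall_fin_succ, Fin.sum_cons]
      simp
    have hS'm : MeasurableSet
        {p : ℝ × (Fin n → ℝ) | (0 < p.1 ∧ ∀ j, 0 < p.2 j) ∧ p.1 + ∑ j, p.2 j ≤ t} := by
      have h1 : {p : ℝ × (Fin n → ℝ) | (0 < p.1 ∧ ∀ j, 0 < p.2 j) ∧ p.1 + ∑ j, p.2 j ≤ t} =
          ({p | 0 < p.1} ∩ ⋂ j, {p | 0 < p.2 j}) ∩ {p | p.1 + ∑ j, p.2 j ≤ t} := by
        ext p
        constructor
        · rintro ⟨⟨a, b⟩, c⟩; exact ⟨⟨a, Set.mem_iInter.2 b⟩, c⟩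
        · rintro ⟨⟨a, b⟩, c⟩; exact ⟨⟨a, fun j => Set.mem_iInter.1 b j⟩, c⟩
      rw [h1]
      have m1 : MeasurableSet {p : ℝ × (Fin n → ℝ) | 0 < p.1} :=
        measurableSet_lt measurable_const measurable_fst
      have m2 : ∀ j : Fin n, MeasurableSet {p : ℝ × (Fin n → ℝ) | 0 < p.2 j} := fun j =>
        measurableSet_lt measurable_const (by fun_prop)
      have m3 : MeasurableSet {p : ℝ × (Fin n → ℝ) | p.1 + ∑ j, p.2 j ≤ t} :=
        measurableSet_le (by fun_prop) measurable_const
      exact (m1.inter (MeasurableSet.iInter m2)).inter m3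
    rw [← key, hpre, Measure.volume_eq_prod, Measure.prod_apply hS'm]
    have hslice : ∀ x : ℝ, x ≠ t →
        volume (Prod.mk x ⁻¹' {p : ℝ × (Fin n → ℝ) |
            (0 < p.1 ∧ ∀ j, 0 < p.2 j) ∧ p.1 + ∑ j, p.2 j ≤ t}) =
          Set.indicator (Set.Ioo 0 t)
            (fun x => ENNReal.ofReal (t - x) ^ n * ((n.factorial : ℝ≥0∞))⁻¹) x := by
      intro x hx
      by_cases hmem : x ∈ Set.Ioo 0 t
      · rw [Set.indicator_of_mem hmem]
        have hset : Prod.mk x ⁻¹' {p : ℝ × (Fin n → ℝ) |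
            (0 < p.1 ∧ ∀ j, 0 < p.2 j) ∧ p.1 + ∑ j, p.2 j ≤ t} =
            {y : Fin n → ℝ | (∀ j, 0 < y j) ∧ ∑ j, y j ≤ t - x} := by
          ext y
          simp only [Set.mem_preimage, Set.mem_setOf_eq]
          constructor
          · rintro ⟨⟨-, h2⟩, h3⟩; exact ⟨h2, by linarith⟩
          · rintro ⟨h2, h3⟩; exact ⟨⟨hmem.1, h2⟩, by linarith⟩
        rw [hset, ih (t - x) (by linarith [hmem.2])]
      · rw [Set.indicator_of_notMem hmem]
        have hset : Prod.mk x ⁻¹' {p : ℝ × (Fin n → ℝ) |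
            (0 < p.1 ∧ ∀ j, 0 < p.2 j) ∧ p.1 + ∑ j, p.2 j ≤ t} = (∅ : Set (Fin n → ℝ)) := by
          ext y
          simp only [Set.mem_preimage, Set.mem_setOf_eq, Set.mem_empty_iff_false, iff_false]
          rintro ⟨⟨h1, h2⟩, h3⟩
          have hy : 0 ≤ ∑ j, y j := Finset.sum_nonneg fun j _ => le_of_lt (h2 j)
          have : x < t ∨ x = t := by
        -- x ≤ t from x + sum ≤ t and sum ≥ 0
            rcases lt_or_eq_of_le (by linarith : x ≤ t) with h | h
            · exact Or.inl h
            · exact Or.inr h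
          rcases this with h | h
          · exact hmem ⟨h1, h⟩
          · exact hx h
        rw [hset, measure_empty]
    have hcong : (fun x : ℝ => volume (Prod.mk x ⁻¹' {p : ℝ × (Fin n → ℝ) |
            (0 < p.1 ∧ ∀ j, 0 < p.2 j) ∧ p.1 + ∑ j, p.2 j ≤ t})) =ᵐ[volume]
        Set.indicator (Set.Ioo 0 t)
            (fun x => ENNReal.ofReal (t - x) ^ n * ((n.factorial : ℝ≥0∞))⁻¹) := by
      have hne : ∀ᵐ x : ℝ, x ≠ t := by
        have h0 : (volume : Measure ℝ) {x | ¬ x ≠ t} = 0 := by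
          simpa using measure_singleton (μ := (volume : Measure ℝ)) t
        exact h0
      filter_upwards [hne] with x hx using hslice x hx
    rw [lintegral_congr_ae hcong, lintegral_indicator measurableSet_Ioo _]
    have hcong2 : ∫⁻ x in Set.Ioo 0 t,
          ENNReal.ofReal (t - x) ^ n * ((n.factorial : ℝ≥0∞))⁻¹ =
        ∫⁻ x in Set.Ioo 0 t,
          ENNReal.ofReal ((t - x) ^ n) * ((n.factorial : ℝ≥0∞))⁻¹ := by
      refine setLIntegral_congr_fun measurableSet_Ioo ?_
      intro x hx
      beta_reduce
      rw [ENNReal.ofReal_pow (by linarith [hx.2])]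
    rw [hcong2]
    have hm : Measurable fun x : ℝ => ENNReal.ofReal ((t - x) ^ n) :=
      ENNReal.measurable_ofReal.comp (by fun_prop)
    rw [lintegral_mul_const _ hm]
    have hc : Continuous fun x : ℝ => (t - x) ^ n := (continuous_const.sub continuous_id).pow n
    have hInt : IntegrableOn (fun x : ℝ => (t - x) ^ n) (Set.Ioo 0 t) volume :=
      (hc.integrableOn_Icc (a := 0) (b := t)).mono_set Set.Ioo_subset_Icc_self
    have hpos : 0 ≤ᵐ[volume.restrict (Set.Ioo 0 t)] fun x : ℝ => (t - x) ^ n := by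
      refine (ae_restrict_iff' measurableSet_Ioo).2 (Filter.Eventually.of_forall ?_)
      intro x hx
      exact pow_nonneg (by linarith [hx.2]) n
    rw [← MeasureTheory.ofReal_integral_eq_lintegral_ofReal hInt hpos]
    have hval : ∫ x in Set.Ioo 0 t, (t - x) ^ n = t ^ (n + 1) / (n + 1) := by
      rw [← MeasureTheory.integral_Ioc_eq_integral_Ioo,
        ← intervalIntegral.integral_of_le ht]
      have := intervalIntegral.integral_comp_sub_left (a := (0:ℝ)) (b := t)
        (fun x : ℝ => x ^ n) t
      rw [this]
      simp [integral_pow]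
    rw [hval]
    have hfact : ((n + 1).factorial : ℝ≥0∞) = ((n + 1 : ℕ) : ℝ≥0∞) * (n.factorial : ℝ≥0∞) := by
      rw [Nat.factorial_succ]; push_cast; ring
    rw [div_eq_mul_inv, ENNReal.ofReal_mul (pow_nonneg ht _),
      ENNReal.ofReal_pow ht, ENNReal.ofReal_inv_of_pos (by positivity)]
    rw [hfact, ENNReal.mul_inv (Or.inl (by exact_mod_cast Nat.succ_ne_zero n))
      (Or.inl (ENNReal.natCast_ne_top _))]
    have : ENNReal.ofReal ((n : ℝ) + 1) = ((n + 1 : ℕ) : ℝ≥0∞) := by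
      rw [← ENNReal.ofReal_natCast]; norm_num
    rw [this]
    ring

lemma coeffSimplexVol (n : ℕ) (c : Fin n → ℝ) (hc : ∀ i, 0 < c i) :
    volume {v : Fin n → ℝ | (∀ i, 0 < v i) ∧ ∑ i, c i * v i ≤ 1} =
      ((n.factorial : ℝ≥0∞))⁻¹ * ∏ i, (ENNReal.ofReal (c i))⁻¹ := by
  set f : (Fin n → ℝ) →ₗ[ℝ] (Fin n → ℝ) := Matrix.toLin' (Matrix.diagonal c) with hf
  have hdet : LinearMap.det f = ∏ i, c i := by
    rw [hf, LinearMap.det_toLin', Matrix.det_diagonal]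
  have hprodpos : 0 < ∏ i, c i := Finset.prod_pos fun i _ => hc i
  have hdet0 : LinearMap.det f ≠ 0 := by rw [hdet]; exact ne_of_gt hprodpos
  have hpre : {v : Fin n → ℝ | (∀ i, 0 < v i) ∧ ∑ i, c i * v i ≤ 1} =
      f ⁻¹' {w : Fin n → ℝ | (∀ i, 0 < w i) ∧ ∑ i, w i ≤ 1} := by
    ext v
    have hfv : ∀ i, f v i = c i * v i := fun i => by
      rw [hf, Matrix.toLin'_apply, Matrix.mulVec_diagonal]
    simp only [Set.mem_setOf_eq, Set.mem_preimage, hfv]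
    constructor
    · rintro ⟨h1, h2⟩
      exact ⟨fun i => mul_pos (hc i) (h1 i), h2⟩
    · rintro ⟨h1, h2⟩
      refine ⟨fun i => ?_, h2⟩
      by_contra h
      push_neg at h
      exact absurd (h1 i) (not_lt.2 (mul_nonpos_of_nonneg_of_nonpos (hc i).le h))
  rw [hpre, Measure.addHaar_preimage_linearMap volume hdet0,
    stdSimplexVol n 1 zero_le_one, hdet]
  rw [abs_of_pos (inv_pos.2 hprodpos), ENNReal.ofReal_inv_of_pos hprodpos,
    ENNReal.ofReal_prod_of_nonneg (fun i _ => (hc i).le),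
    ENNReal.prod_inv_distrib (fun i _ j _ _ => Or.inl (by
      simpa using (ENNReal.ofReal_pos.2 (hc i)).ne'))]
  simp [mul_comm]


lemma T_lt {k ℓ m : ℕ} (h : m < k) : T k ℓ m = if ℓ ≤ m then 1 else 0 := by
  rw [T, if_pos h]

lemma T_ge {k ℓ m : ℕ} (hk : 2 ≤ k) (h : k ≤ m) :
    T k ℓ m = ∑ p ∈ Finset.range (k - 1), T k ℓ (m - (p + 1)) := by
  rw [T, if_neg (by omega), dif_neg (by omega)]
  exact Finset.sum_attach _ fun p => T k ℓ (m - (p + 1))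

lemma T_pos {k ℓ : ℕ} (hk : 3 ≤ k) (hℓ : 1 ≤ ℓ) (hℓk : ℓ ≤ k - 1) :
    ∀ m : ℕ, ℓ ≤ m → 1 ≤ T k ℓ m := by
  intro m
  induction m using Nat.strong_induction_on with
  | _ m ih =>
    intro hm
    by_cases h : m < k
    · rw [T_lt h, if_pos hm]
    · rw [T_ge (by omega) (by omega)]
      have h0 : (0 : ℕ) ∈ Finset.range (k - 1) := by simp; omega
      have h1 : 1 ≤ T k ℓ (m - (0 + 1)) := ih _ (by omega) (by omega)
      exact le_trans h1 (Finset.single_le_sum (f := fun p => T k ℓ (m - (p + 1)))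
        (fun p _ => Nat.zero_le _) h0)

/-- coefficient of `v ℓ` in the expansion of `u m` (0-indexed). -/
def coeff (k m ℓ : ℕ) : ℕ :=
  if ℓ ≤ k - 2 then T k (ℓ + 1) (m + 1)
  else if ℓ ≤ m then T k (k - 1) (m - ℓ + (k - 1)) else 0

lemma coeff_eq_zero {k m ℓ : ℕ} (hk : 3 ≤ k) (h : m < ℓ) : coeff k m ℓ = 0 := by
  unfold coeff
  by_cases h1 : ℓ ≤ k - 2
  · rw [if_pos h1, T_lt (by omega), if_neg (by omega)]
  · rw [if_neg h1, if_neg (by omega)]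

lemma coeff_zero {k ℓ : ℕ} (hk : 3 ≤ k) :
    coeff k 0 ℓ = if ℓ = 0 then 1 else 0 := by
  unfold coeff
  by_cases h1 : ℓ ≤ k - 2
  · rw [if_pos h1, T_lt (by omega)]
    split_ifs <;> omega
  · rw [if_neg h1, if_neg (by omega), if_neg (by omega)]

lemma coeff_rec_small {k m ℓ : ℕ} (hk : 3 ≤ k) (h1 : 1 ≤ m) (h2 : m ≤ k - 2) :
    coeff k m ℓ = (if ℓ = m then 1 else 0) + coeff k (m - 1) ℓ := by
  unfold coeff
  by_cases hℓ : ℓ ≤ k - 2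
  · rw [if_pos hℓ, if_pos hℓ, T_lt (by omega), T_lt (by omega)]
    have : m - 1 + 1 = m := by omega
    rw [this]
    split_ifs <;> omega
  · rw [if_neg hℓ, if_neg hℓ, if_neg (by omega), if_neg (by omega), if_neg (by omega)]

lemma coeff_rec_big {k m ℓ : ℕ} (hk : 3 ≤ k) (h1 : k - 1 ≤ m) :
    coeff k m ℓ = (if ℓ = m then 1 else 0) +
      ∑ p ∈ Finset.range (k - 1), coeff k (m - 1 - p) ℓ := by
  by_cases hℓ : ℓ ≤ k - 2
  · have hδ : (if ℓ = m then 1 else 0) = 0 := by rw [if_neg (by omega)]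
    rw [hδ, zero_add]
    unfold coeff
    rw [if_pos hℓ, T_ge (by omega) (by omega)]
    refine Finset.sum_congr rfl fun p hp => ?_
    rw [Finset.mem_range] at hp
    rw [if_pos hℓ]
    congr 1
    omega
  · by_cases hm : m < ℓ
    · rw [coeff_eq_zero hk hm, if_neg (by omega)]
      rw [Finset.sum_eq_zero fun p hp => coeff_eq_zero hk (by omega), add_zero]
    · by_cases heq : ℓ = m
      · subst heq
        unfold coeff
        rw [if_neg hℓ, if_pos le_rfl, if_pos rfl]
        have harg : ℓ - ℓ + (k - 1) = k - 1 := by omega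
        rw [harg, T_lt (by omega), if_pos le_rfl]
        rw [Finset.sum_eq_zero fun p hp => ?_, add_zero]
        have : ℓ - 1 - p < ℓ := by
          rw [Finset.mem_range] at hp; omega
        exact coeff_eq_zero hk this
      · -- ℓ < m, ℓ ≥ k-1
        have hlm : ℓ < m := by omega
        rw [if_neg heq, zero_add]
        unfold coeff
        rw [if_neg hℓ, if_pos (by omega)]
        rw [T_ge (by omega) (by omega)]
        refine Finset.sum_congr rfl fun p hp => ?_
        rw [Finset.mem_range] at hp
        by_cases hp2 : ℓ ≤ m - 1 - p
        · rw [if_neg hℓ, if_pos hp2]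
          congr 1
          omega
        · rw [if_neg hℓ, if_neg hp2, T_lt (by omega), if_neg (by omega)]

/-- index set of subtracted coordinates -/
def Jset (n k : ℕ) (i : Fin n) : Finset (Fin n) :=
  Finset.univ.filter (fun j => j < i ∧ i.val ≤ j.val + (if i.val ≤ k - 2 then 1 else k - 1))

def Mmat (n k : ℕ) : Matrix (Fin n) (Fin n) ℝ := fun i j =>
  if j = i then 1 else if j ∈ Jset n k i then -1 else 0

lemma Mmat_det (n k : ℕ) : (Mmat n k).det = 1 := by
  have h : (Mmat n k).BlockTriangular OrderDual.toDual := by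
    intro i j hij
    have hij' : i < j := hij
    unfold Mmat
    rw [if_neg (by exact fun h => absurd h (by exact Fin.ne_of_gt hij')), if_neg]
    unfold Jset
    simp only [Finset.mem_filter, Finset.mem_univ, true_and, not_and]
    intro hlt
    exact absurd hlt (not_lt.2 hij'.le)
  rw [Matrix.det_of_lowerTriangular _ h]
  simp [Mmat]

lemma Mmat_mulVec (n k : ℕ) (u : Fin n → ℝ) (i : Fin n) :
    (Mmat n k).mulVec u i = u i - ∑ j ∈ Jset n k i, u j := by
  unfold Matrix.mulVec dotProduct
  have hsplit : ∀ j : Fin n, Mmat n k i j * u j =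
      (if j = i then u j else 0) + (if j ∈ Jset n k i then -u j else 0) := by
    intro j
    unfold Mmat
    by_cases h1 : j = i
    · have h2 : j ∉ Jset n k i := by
        subst h1
        unfold Jset
        simp
      rw [if_pos h1, if_pos h1, if_neg h2, one_mul, add_zero]
    · rw [if_neg h1, if_neg h1]
      by_cases h2 : j ∈ Jset n k i
      · rw [if_pos h2, if_pos h2, zero_add]; ring
      · rw [if_neg h2, if_neg h2, zero_mul, add_zero]
  rw [Finset.sum_congr rfl fun j _ => hsplit j, Finset.sum_add_distrib]
  congr 1
  · rw [Finset.sum_ite_eq' Finset.univ i u, if_pos (Finset.mem_univ i)]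
  · rw [← Finset.sum_neg_distrib, ← Finset.sum_filter]
    congr 1
    ext j
    simp

lemma mem_Jset {n k : ℕ} {i j : Fin n} :
    j ∈ Jset n k i ↔ j < i ∧ i.val ≤ j.val + (if i.val ≤ k - 2 then 1 else k - 1) := by
  simp [Jset]

lemma Jset_zero {n k : ℕ} {i : Fin n} (h : i.val = 0) : Jset n k i = ∅ := by
  ext j
  simp only [mem_Jset, Finset.notMem_empty, iff_false, not_and]
  intro hj
  exact absurd (Fin.lt_def.1 hj) (by omega)

lemma sum_Jset_small {n k : ℕ} {i : Fin n} (h1 : 1 ≤ i.val) (h2 : i.val ≤ k - 2)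
    (f : Fin n → ℝ) :
    ∑ j ∈ Jset n k i, f j = f ⟨i.val - 1, by omega⟩ := by
  have : Jset n k i = {⟨i.val - 1, by omega⟩} := by
    ext j
    simp only [mem_Jset, Finset.mem_singleton, Fin.lt_def, if_pos h2, Fin.ext_iff]
    omega
  rw [this, Finset.sum_singleton]

lemma sum_Jset_big {n k : ℕ} {i : Fin n} (hk : 3 ≤ k) (h : k - 1 ≤ i.val)
    (f : Fin n → ℝ) :
    ∑ j ∈ Jset n k i, f j = ∑ p ∈ Finset.range (k - 1), f ⟨i.val - 1 - p, by omega⟩ := by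
  refine Finset.sum_nbij' (fun j => i.val - 1 - j.val)
    (fun p => ⟨i.val - 1 - p, by omega⟩) ?_ ?_ ?_ ?_ ?_
  · intro j hj
    rw [mem_Jset, if_neg (by omega), Fin.lt_def] at hj
    rw [Finset.mem_range]
    show i.val - 1 - j.val < k - 1
    omega
  · intro p hp
    rw [Finset.mem_range] at hp
    rw [mem_Jset, if_neg (by omega), Fin.lt_def]
    refine ⟨?_, ?_⟩ <;> · show (_ : ℕ) ≤ _; simp only [Fin.val_mk]; omega
  · intro j hj
    rw [mem_Jset, if_neg (by omega), Fin.lt_def] at hj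
    apply Fin.ext
    show i.val - 1 - (i.val - 1 - j.val) = j.val
    omega
  · intro p hp
    rw [Finset.mem_range] at hp
    show i.val - 1 - (i.val - 1 - p) = p
    omega
  · intro j hj
    rw [mem_Jset, if_neg (by omega), Fin.lt_def] at hj
    congr 1
    apply Fin.ext
    show j.val = i.val - 1 - (i.val - 1 - j.val)
    omega

lemma expand {n k : ℕ} (hk : 3 ≤ k) (hkn : k ≤ n) (u v : Fin n → ℝ)
    (hv : ∀ i : Fin n, v i = u i - ∑ j ∈ Jset n k i, u j) :
    ∀ M : ℕ, ∀ hM : M < n, u ⟨M, hM⟩ = ∑ ℓ : Fin n, (coeff k M ℓ.val : ℝ) * v ℓ := by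
  intro M
  induction M using Nat.strong_induction_on with
  | _ M ih =>
    intro hM
    set m : Fin n := ⟨M, hM⟩ with hm
    have hum : u m = v m + ∑ j ∈ Jset n k m, u j := by rw [hv m]; ring
    have hconv : ∑ j ∈ Jset n k m, u j =
        ∑ j ∈ Jset n k m, ∑ ℓ : Fin n, (coeff k j.val ℓ.val : ℝ) * v ℓ := by
      refine Finset.sum_congr rfl fun j hj => ?_
      have hjm : j.val < M := Fin.lt_def.1 (mem_Jset.1 hj).1
      have := ih j.val hjm j.isLt
      simpa using this
    have hvm : v m = ∑ ℓ : Fin n, (if ℓ = m then (1:ℝ) else 0) * v ℓ := by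
      have hstep : ∀ ℓ : Fin n, (if ℓ = m then (1:ℝ) else 0) * v ℓ =
          if ℓ = m then v ℓ else 0 := fun ℓ => by split_ifs <;> simp
      rw [Finset.sum_congr rfl fun ℓ _ => hstep ℓ,
        Finset.sum_ite_eq' Finset.univ m v, if_pos (Finset.mem_univ m)]
    rw [hum, hconv, Finset.sum_comm, hvm, ← Finset.sum_add_distrib]
    refine Finset.sum_congr rfl fun ℓ _ => ?_
    rw [← Finset.sum_mul, ← add_mul]
    congr 1
    have hif : (if ℓ = m then (1:ℝ) else 0) = ((if ℓ.val = M then 1 else 0 : ℕ) : ℝ) := by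
      rw [hm]
      by_cases h : ℓ = m
      · rw [if_pos h, if_pos (by rw [h]), Nat.cast_one]
      · rw [if_neg h, if_neg (by rw [Fin.ext_iff] at h; simpa using h), Nat.cast_zero]
    rw [hif]
    by_cases hM0 : M = 0
    · subst hM0
      rw [Jset_zero (by simp [hm]), Finset.sum_empty, add_zero, coeff_zero hk]
    · by_cases hMs : M ≤ k - 2
      · rw [sum_Jset_small (i := m) (by show 1 ≤ M; omega) (by show M ≤ k - 2; omega)
          (fun j => (coeff k j.val ℓ.val : ℝ))]
        rw [coeff_rec_small hk (by omega) hMs]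
        push_cast
        norm_num
        rfl
      · rw [sum_Jset_big (i := m) hk (by show k - 1 ≤ M; omega)
          (fun j => (coeff k j.val ℓ.val : ℝ))]
        rw [coeff_rec_big hk (by omega)]
        push_cast
        norm_num
        rfl

lemma sum_window {n k : ℕ} (hk : 3 ≤ k) (u : Fin n → ℝ) (m : ℕ) (hm : k - 1 ≤ m)
    (hmn : m < n) :
    (∑ j : Fin (k - 1), u ⟨m + 1 - k + j.val, by have := j.isLt; omega⟩) =
      ∑ p ∈ Finset.range (k - 1), u ⟨m - 1 - p, by omega⟩ := by
  refine Finset.sum_nbij' (fun j => k - 2 - j.val) (fun p => ⟨k - 2 - p, by omega⟩)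
    ?_ ?_ ?_ ?_ ?_
  · intro j _
    rw [Finset.mem_range]
    show k - 2 - j.val < k - 1
    have := j.isLt
    omega
  · intro p _
    exact Finset.mem_univ _
  · intro j _
    apply Fin.ext
    show k - 2 - (k - 2 - j.val) = j.val
    have := j.isLt
    omega
  · intro p hp
    rw [Finset.mem_range] at hp
    show k - 2 - (k - 2 - p) = p
    omega
  · intro j _
    congr 1
    apply Fin.ext
    show m + 1 - k + j.val = m - 1 - (k - 2 - j.val)
    have := j.isLt
    omega


/-- **Volume of `E_{n,k}`.** For `n ≥ 3`, `3 ≤ k ≤ n`, the Lebesgue measure of the set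
`E_{n,k}` of `u ∈ ℝ^n` (coordinates indexed `1,…,n`) with `0 < u_1`,
`u_{i-1} < u_i` for `2 ≤ i ≤ k-1`, `∑_{j=i-k+1}^{i-1} u_j < u_i` for `k ≤ i ≤ n`,
and `u_n ≤ 1`, equals
`(1/n!) · ∏_{ℓ=1}^{k-1} (1/T_{k,ℓ}(n)) · ∏_{i=1}^{n-k+1} (1/T_{k,k-1}(n-i))`. -/
theorem volume_Enk (n k : ℕ) (hn : 3 ≤ n) (hk : 3 ≤ k) (hkn : k ≤ n) :
    volume {u : Fin n → ℝ |
        0 < u ⟨0, by omega⟩ ∧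
        (∀ i : ℕ, ∀ h2 : 2 ≤ i, ∀ hik : i ≤ k - 1,
          u ⟨i - 2, by omega⟩ < u ⟨i - 1, by omega⟩) ∧
        (∀ i : ℕ, ∀ hki : k ≤ i, ∀ hin : i ≤ n,
          (∑ j : Fin (k - 1), u ⟨i - k + j, by have := j.isLt; omega⟩) <
            u ⟨i - 1, by omega⟩) ∧
        u ⟨n - 1, by omega⟩ ≤ 1} =
      ((n.factorial : ℝ≥0∞))⁻¹ *
        (∏ ℓ ∈ Finset.Icc 1 (k - 1), ((T k ℓ n : ℝ≥0∞))⁻¹) *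
        ∏ i ∈ Finset.Icc 1 (n - k + 1), ((T k (k - 1) (n - i) : ℝ≥0∞))⁻¹ := by
  set c : Fin n → ℝ := fun ℓ => (coeff k (n - 1) ℓ.val : ℝ) with hc
  have hcpos : ∀ i : Fin n, 0 < c i := by
    intro i
    show (0 : ℝ) < ((coeff k (n - 1) i.val : ℕ) : ℝ)
    have h1 : 1 ≤ coeff k (n - 1) i.val := by
      unfold coeff
      by_cases h : i.val ≤ k - 2
      · rw [if_pos h]
        exact T_pos hk (by omega) (by omega) _ (by omega)
      · rw [if_neg h, if_pos (by have := i.isLt; omega)]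
        exact T_pos hk (by omega) (by omega) _ (by omega)
    exact_mod_cast Nat.lt_of_lt_of_le Nat.zero_lt_one h1
  set f : (Fin n → ℝ) →ₗ[ℝ] (Fin n → ℝ) := Matrix.toLin' (Mmat n k) with hfdef
  have hdet : LinearMap.det f = 1 := by
    rw [hfdef, LinearMap.det_toLin', Mmat_det]
  have hset : {u : Fin n → ℝ |
        0 < u ⟨0, by omega⟩ ∧
        (∀ i : ℕ, ∀ h2 : 2 ≤ i, ∀ hik : i ≤ k - 1,
          u ⟨i - 2, by omega⟩ < u ⟨i - 1, by omega⟩) ∧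
        (∀ i : ℕ, ∀ hki : k ≤ i, ∀ hin : i ≤ n,
          (∑ j : Fin (k - 1), u ⟨i - k + j, by have := j.isLt; omega⟩) <
            u ⟨i - 1, by omega⟩) ∧
        u ⟨n - 1, by omega⟩ ≤ 1} =
      f ⁻¹' {w : Fin n → ℝ | (∀ i, 0 < w i) ∧ ∑ i, c i * w i ≤ 1} := by
    ext u
    set v : Fin n → ℝ := (Mmat n k).mulVec u with hvdef
    have hfv : f u = v := by rw [hfdef, Matrix.toLin'_apply]
    have hv : ∀ i : Fin n, v i = u i - ∑ j ∈ Jset n k i, u j := fun i => Mmat_mulVec n k u i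
    have hexp : u ⟨n - 1, by omega⟩ = ∑ ℓ : Fin n, c ℓ * v ℓ :=
      expand hk hkn u v hv (n - 1) (by omega)
    simp only [Set.mem_setOf_eq, Set.mem_preimage, hfv]
    constructor
    · rintro ⟨h1, h2, h3, h4⟩
      refine ⟨fun i => ?_, by rw [← hexp]; exact h4⟩
      rw [hv i]
      by_cases hi0 : i.val = 0
      · rw [Jset_zero hi0, Finset.sum_empty, sub_zero]
        have : i = ⟨0, by omega⟩ := Fin.ext hi0
        rw [this]; exact h1
      · by_cases his : i.val ≤ k - 2
        · rw [sum_Jset_small (by omega) his u]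
          have := h2 (i.val + 1) (by omega) (by omega)
          have e1 : (⟨i.val + 1 - 2, by omega⟩ : Fin n) = ⟨i.val - 1, by omega⟩ :=
            Fin.ext (by show i.val + 1 - 2 = i.val - 1; omega)
          have e2 : (⟨i.val + 1 - 1, by omega⟩ : Fin n) = i :=
            Fin.ext (by show i.val + 1 - 1 = i.val; omega)
          rw [e1, e2] at this
          linarith
        · rw [sum_Jset_big hk (by omega) u]
          have := h3 (i.val + 1) (by omega) (by have := i.isLt; omega)
          rw [sum_window hk u i.val (by omega) i.isLt] at this
          have e2 : (⟨i.val + 1 - 1, by omega⟩ : Fin n) = i :=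
            Fin.ext (by show i.val + 1 - 1 = i.val; omega)
          rw [e2] at this
          linarith
    · rintro ⟨h1, h2⟩
      have hval : ∀ i : Fin n, 0 < u i - ∑ j ∈ Jset n k i, u j := fun i => by
        rw [← hv i]; exact h1 i
      refine ⟨?_, ?_, ?_, by rw [hexp]; exact h2⟩
      · have := hval ⟨0, by omega⟩
        rwa [Jset_zero rfl, Finset.sum_empty, sub_zero] at this
      · intro i hi2 hik
        have := hval ⟨i - 1, by omega⟩
        rw [sum_Jset_small (by show 1 ≤ i - 1; omega) (by show i - 1 ≤ k - 2; omega) u]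
          at this
        have e1 : (⟨(⟨i - 1, by omega⟩ : Fin n).val - 1, by omega⟩ : Fin n) =
            ⟨i - 2, by omega⟩ := Fin.ext (by simp; omega)
        rw [e1] at this
        have e2 : (⟨i - 1, by omega⟩ : Fin n) = ⟨i - 1, by omega⟩ := rfl
        linarith
      · intro i hki hin
        have := hval ⟨i - 1, by omega⟩
        rw [sum_Jset_big hk (by show k - 1 ≤ i - 1; omega) u] at this
        have hw := sum_window hk u (i - 1) (by omega) (by omega)
        refine lt_of_eq_of_lt (Eq.trans ?_ hw) (sub_pos.mp this)
        refine Finset.sum_congr rfl fun j _ => ?_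
        congr 1
        apply Fin.ext
        show i - k + j.val = i - 1 + 1 - k + j.val
        omega
  rw [hset, Measure.addHaar_preimage_linearMap volume (by rw [hdet]; norm_num),
    hdet, coeffSimplexVol n c hcpos]
  norm_num
  -- now transform the product
  have hofc : ∀ i : Fin n, (ENNReal.ofReal (c i))⁻¹ =
      ((coeff k (n - 1) i.val : ℝ≥0∞))⁻¹ := by
    intro i
    rw [hc]
    norm_num [ENNReal.ofReal_natCast]
  rw [Finset.prod_congr rfl fun i _ => hofc i]
  have hprodsplit :
      (∏ i : Fin n, ((coeff k (n - 1) i.val : ℝ≥0∞))⁻¹) =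
        (∏ ℓ ∈ Finset.Icc 1 (k - 1), ((T k ℓ n : ℝ≥0∞))⁻¹) *
          ∏ i ∈ Finset.Icc 1 (n - k + 1), ((T k (k - 1) (n - i) : ℝ≥0∞))⁻¹ := by
    rw [Fin.prod_univ_eq_prod_range (fun p => ((coeff k (n - 1) p : ℝ≥0∞))⁻¹) n]
    rw [Finset.range_eq_Ico, ← Finset.prod_Ico_consecutive _ (by omega : 0 ≤ k - 1)
      (by omega : k - 1 ≤ n)]
    congr 1
    · refine Finset.prod_nbij' (fun p => p + 1) (fun ℓ => ℓ - 1) ?_ ?_ ?_ ?_ ?_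
      · intro p hp
        rw [Finset.mem_Ico] at hp
        rw [Finset.mem_Icc]
        show 1 ≤ p + 1 ∧ p + 1 ≤ k - 1
        omega
      · intro ℓ hℓ
        rw [Finset.mem_Icc] at hℓ
        rw [Finset.mem_Ico]
        show 0 ≤ ℓ - 1 ∧ ℓ - 1 < k - 1
        omega
      · intro p _
        show p + 1 - 1 = p
        omega
      · intro ℓ hℓ
        rw [Finset.mem_Icc] at hℓ
        show ℓ - 1 + 1 = ℓ
        omega
      · intro p hp
        rw [Finset.mem_Ico] at hp
        show ((coeff k (n - 1) p : ℝ≥0∞))⁻¹ = ((T k (p + 1) n : ℝ≥0∞))⁻¹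
        unfold coeff
        rw [if_pos (by omega)]
        have harg : n - 1 + 1 = n := by omega
        rw [harg]
    · refine Finset.prod_nbij' (fun p => p - (k - 2)) (fun i => i + (k - 2)) ?_ ?_ ?_ ?_ ?_
      · intro p hp
        rw [Finset.mem_Ico] at hp
        rw [Finset.mem_Icc]
        show 1 ≤ p - (k - 2) ∧ p - (k - 2) ≤ n - k + 1
        omega
      · intro i hi
        rw [Finset.mem_Icc] at hi
        rw [Finset.mem_Ico]
        show k - 1 ≤ i + (k - 2) ∧ i + (k - 2) < n
        omega
      · intro p hp
        rw [Finset.mem_Ico] at hp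
        show p - (k - 2) + (k - 2) = p
        omega
      · intro i hi
        rw [Finset.mem_Icc] at hi
        show i + (k - 2) - (k - 2) = i
        omega
      · intro p hp
        rw [Finset.mem_Ico] at hp
        show ((coeff k (n - 1) p : ℝ≥0∞))⁻¹ =
          ((T k (k - 1) (n - (p - (k - 2))) : ℝ≥0∞))⁻¹
        unfold coeff
        rw [if_neg (by omega), if_pos (by omega)]
        have harg : n - 1 - p + (k - 1) = n - (p - (k - 2)) := by omega
        rw [harg]
  rw [hprodsplit, mul_assoc]
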